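/- Let G be a finite nilpotent group whose order has distinct prime factors p_1, p_2, …, p_r, and for each i let m_i be the number of maximal cyclic subgroups of a Sylow p_i-subgroup of G. Then the independence number of the enhanced power graph of G equals the product m_1 · m_2 · … · m_r. -/

import Mathlib

/-- The enhanced power graph of a group `G`: distinct `x, y` are adjacent iff they lie in a
common cyclic subgroup of `G`. -/
def enhancedPowerGraph (G : Type*) [Group G] : SimpleGraph G where
  Adj x y := x ≠ y ∧ ∃ z : G, x ∈ Subgroup.zpowers z ∧ y ∈ Subgroup.zpowers z
  symm := by
    constructor
    rintro x y ⟨hxy, z, hx, hy⟩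
    exact ⟨hxy.symm, z, hy, hx⟩
  loopless := by
    constructor
    rintro x ⟨hx, -⟩
    exact hx rfl

/-- The minimum degree of a finite graph. -/
noncomputable def minDeg {V : Type*} [Fintype V] (g : SimpleGraph V) : ℕ :=
  sInf {k | ∃ v : V, (g.neighborSet v).ncard = k}

/-- A set of vertices is independent if no two of its members are adjacent. -/
def IsIndepSet' {V : Type*} (g : SimpleGraph V) (s : Set V) : Prop :=
  s.Pairwise fun x y => ¬ g.Adj x y

/-- The independence number. -/
noncomputable def indepNum {V : Type*} (g : SimpleGraph V) : ℕ :=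
  sSup {k | ∃ s : Set V, IsIndepSet' g s ∧ s.ncard = k}

/-- A matching: a set of edges of `g`, no two of which share a vertex. -/
def IsMatching' {V : Type*} (g : SimpleGraph V) (M : Set (Sym2 V)) : Prop :=
  M ⊆ g.edgeSet ∧ M.Pairwise fun e f => ∀ v : V, v ∈ e → v ∉ f

/-- The matching number. -/
noncomputable def matchingNum {V : Type*} (g : SimpleGraph V) : ℕ :=
  sSup {k | ∃ M : Set (Sym2 V), IsMatching' g M ∧ M.ncard = k}

/-- An edge cover: a set of edges such that every vertex is incident to some edge of it. -/
def IsEdgeCover {V : Type*} (g : SimpleGraph V) (E : Set (Sym2 V)) : Prop :=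
  E ⊆ g.edgeSet ∧ ∀ v : V, ∃ e ∈ E, v ∈ e

/-- The edge covering number. -/
noncomputable def edgeCoverNum {V : Type*} (g : SimpleGraph V) : ℕ :=
  sInf {k | ∃ E : Set (Sym2 V), IsEdgeCover g E ∧ E.ncard = k}

/-- A vertex cover: a set of vertices containing an endpoint of every edge. -/
def IsVertexCover {V : Type*} (g : SimpleGraph V) (s : Set V) : Prop :=
  ∀ ⦃x y : V⦄, g.Adj x y → x ∈ s ∨ y ∈ s

/-- The vertex covering number. -/
noncomputable def vertexCoverNum {V : Type*} (g : SimpleGraph V) : ℕ :=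
  sInf {k | ∃ s : Set V, IsVertexCover g s ∧ s.ncard = k}

/-- The edge connectivity: the least size of a set of edges whose deletion disconnects. -/
noncomputable def edgeConnectivity {V : Type*} (g : SimpleGraph V) : ℕ :=
  sInf {k | ∃ S : Set (Sym2 V), S ⊆ g.edgeSet ∧ ¬ (g.deleteEdges S).Connected ∧ S.ncard = k}

/-- The strong metric dimension. -/
noncomputable def sdim {V : Type*} (g : SimpleGraph V) : ℕ :=
  sInf {k | ∃ U : Set V,
    (∀ u v : V, u ≠ v → ∃ z ∈ U,
      g.dist z u = g.dist z v + g.dist v u ∨ g.dist z v = g.dist z u + g.dist u v) ∧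
    U.ncard = k}

/-- The clique number. -/
noncomputable def cliqueNum' {V : Type*} (g : SimpleGraph V) : ℕ :=
  sSup {k | ∃ s : Finset V, g.IsNClique k s}

/-- A graph is perfect if every induced subgraph has chromatic number equal to clique number. -/
def IsPerfect {V : Type*} (g : SimpleGraph V) : Prop :=
  ∀ s : Set V, (g.induce s).chromaticNumber = (cliqueNum' (g.induce s) : ℕ∞)

/-- `H` is a maximal cyclic subgroup of `G`. -/
def IsMaximalCyclic {G : Type*} [Group G] (H : Subgroup G) : Prop :=
  (∃ g : G, H = Subgroup.zpowers g) ∧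
    ∀ K : Subgroup G, (∃ g : G, K = Subgroup.zpowers g) → H ≤ K → H = K


set_option linter.unusedSectionVars false

lemma exists_isMaximalCyclic_le {G : Type*} [Group G] [Finite G] (x : G) :
    ∃ M : Subgroup G, IsMaximalCyclic M ∧ Subgroup.zpowers x ≤ M := by
  classical
  set S : Set (Subgroup G) :=
    {K : Subgroup G | (∃ g, K = Subgroup.zpowers g) ∧ Subgroup.zpowers x ≤ K} with hS
  have hfin : S.Finite := Set.toFinite _
  have hne : S.Nonempty := ⟨Subgroup.zpowers x, ⟨x, rfl⟩, le_rfl⟩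
  obtain ⟨M, hM, hmax⟩ := Set.Finite.exists_maximalFor id S hfin hne
  refine ⟨M, ⟨hM.1, ?_⟩, hM.2⟩
  intro K hK hMK
  exact le_antisymm hMK (hmax ⟨hK, hM.2.trans hMK⟩ hMK)

lemma indepNum_eq_card_isMaximalCyclic {G : Type*} [Group G] [Fintype G] :
    indepNum (enhancedPowerGraph G) = {H : Subgroup G | IsMaximalCyclic H}.ncard := by
  classical
  set T : Set (Subgroup G) := {H | IsMaximalCyclic H} with hT
  have hgen : ∀ H ∈ T, ∃ g : G, H = Subgroup.zpowers g := fun H hH => hH.1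
  choose! g hg using hgen
  have hinjg : Set.InjOn g T := fun H hH K hK h => by
    rw [hg H hH, hg K hK, h]
  have hub : ∀ k ∈ {k | ∃ s : Set G, IsIndepSet' (enhancedPowerGraph G) s ∧ s.ncard = k},
      k ≤ T.ncard := by
    rintro k ⟨s, hs, rfl⟩
    choose f hf1 hf2 using fun x : G => exists_isMaximalCyclic_le x
    have hinj : Set.InjOn f s := by
      intro x hx y hy hxy
      by_contra hne
      obtain ⟨z, hz⟩ := (hf1 x).1
      refine hs hx hy hne ⟨hne, z, ?_, ?_⟩
      · rw [← hz]; exact hf2 x (Subgroup.mem_zpowers x)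
      · rw [← hz, hxy]; exact hf2 y (Subgroup.mem_zpowers y)
    calc s.ncard = (f '' s).ncard := (Set.ncard_image_of_injOn hinj).symm
      _ ≤ T.ncard := Set.ncard_le_ncard (by rintro _ ⟨x, hx, rfl⟩; exact hf1 x) (Set.toFinite T)
  apply le_antisymm
  · exact csSup_le ⟨0, ∅, by simp [IsIndepSet'], by simp⟩ hub
  · apply le_csSup ⟨T.ncard, hub⟩
    refine ⟨g '' T, ?_, Set.ncard_image_of_injOn hinjg⟩
    rintro _ ⟨H, hH, rfl⟩ _ ⟨K, hK, rfl⟩ hne ⟨_, z, hx, hy⟩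
    have h1 : H = Subgroup.zpowers z := by
      refine hH.2 _ ⟨z, rfl⟩ ?_
      rw [hg H hH]
      exact (Subgroup.zpowers_le).mpr hx
    have h2 : K = Subgroup.zpowers z := by
      refine hK.2 _ ⟨z, rfl⟩ ?_
      rw [hg K hK]
      exact (Subgroup.zpowers_le).mpr hy
    exact hne (by rw [h1.trans h2.symm])

section PiLemmas

variable {ι : Type*} [Fintype ι] [DecidableEq ι] {f : ι → Type*} [∀ i, Group (f i)] [∀ i, Finite (f i)]

lemma zpowers_pi (hco : Pairwise fun i j => Nat.Coprime (Nat.card (f i)) (Nat.card (f j)))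
    (z : ∀ i, f i) :
    Subgroup.zpowers z = Subgroup.pi Set.univ fun i => Subgroup.zpowers (z i) := by
  apply le_antisymm
  · rw [Subgroup.zpowers_le]
    rw [Subgroup.mem_pi]
    intro i _
    exact Subgroup.mem_zpowers _
  · intro x hx
    rw [Subgroup.mem_pi] at hx
    have hm : ∀ j, ∃ m : ℕ, z j ^ m = x j := by
      intro j
      have := (mem_powers_iff_mem_zpowers).mpr (hx j (Set.mem_univ j))
      exact (Submonoid.mem_powers_iff _ _).mp this
    choose m hmz using hm
    set n : ι → ℕ := fun j => orderOf (z j) with hn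
    have hne : ∀ j ∈ Finset.univ, n j ≠ 0 := fun j _ => (orderOf_pos (z j)).ne'
    have hpp : Set.Pairwise (Finset.univ : Finset ι) (Function.onFun Nat.Coprime n) := by
      intro i _ j _ hij
      exact Nat.Coprime.coprime_dvd_left (orderOf_dvd_natCard _)
        ((hco hij).coprime_dvd_right (orderOf_dvd_natCard _))
    obtain ⟨k, hk⟩ := Nat.chineseRemainderOfFinset m n Finset.univ hne hpp
    refine ⟨(k : ℤ), ?_⟩
    show z ^ (k : ℤ) = x
    rw [zpow_natCast]
    funext j
    rw [Pi.pow_apply]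
    calc z j ^ k = z j ^ m j := pow_eq_pow_iff_modEq.mpr (hk j (Finset.mem_univ j))
      _ = x j := hmz j

lemma isMaximalCyclic_pi (hco : Pairwise fun i j => Nat.Coprime (Nat.card (f i)) (Nat.card (f j))) {N : ∀ i, Subgroup (f i)} (hN : ∀ i, IsMaximalCyclic (N i)) :
    IsMaximalCyclic (Subgroup.pi Set.univ N) := by
  choose g hg using fun i => (hN i).1
  have hpi : Subgroup.pi Set.univ N = Subgroup.zpowers g := by
    rw [zpowers_pi hco]
    exact congrArg _ (funext fun i => hg i)
  refine ⟨⟨g, hpi⟩, ?_⟩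
  rintro K ⟨w, rfl⟩ hle
  have hcomp : ∀ i, N i = Subgroup.zpowers (w i) := by
    intro i
    refine (hN i).2 _ ⟨w i, rfl⟩ ?_
    intro x hx
    have hmem : Pi.mulSingle i x ∈ Subgroup.pi Set.univ N := by
      rw [Subgroup.mem_pi]
      intro j _
      rcases eq_or_ne j i with rfl | hji
      · simpa using hx
      · rw [Pi.mulSingle_eq_of_ne hji]
        exact one_mem _
    obtain ⟨mi, hmi⟩ := hle hmem
    refine ⟨mi, ?_⟩
    have := congrFun hmi i
    simpa using this
  have : Subgroup.pi Set.univ N = Subgroup.pi Set.univ fun i => Subgroup.zpowers (w i) :=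
    congrArg _ (funext hcomp)
  rw [this, ← zpowers_pi hco]

lemma isMaximalCyclic_map_eval (hco : Pairwise fun i j => Nat.Coprime (Nat.card (f i)) (Nat.card (f j))) {M : Subgroup (∀ i, f i)} (hM : IsMaximalCyclic M) (i : ι) :
    IsMaximalCyclic (M.map (Pi.evalMonoidHom f i)) := by
  obtain ⟨⟨z, rfl⟩, hmax⟩ := hM
  rw [MonoidHom.map_zpowers]
  refine ⟨⟨z i, rfl⟩, ?_⟩
  rintro K ⟨w, rfl⟩ hle
  set z' := Function.update z i w with hz'
  have h1 : Subgroup.zpowers z ≤ Subgroup.zpowers z' := by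
    rw [zpowers_pi hco, zpowers_pi hco]
    intro x hx
    rw [Subgroup.mem_pi] at hx ⊢
    intro j hj
    rcases eq_or_ne j i with rfl | hji
    · rw [hz', Function.update_self]
      exact hle (hx j hj)
    · rw [hz', Function.update_of_ne hji]
      exact hx j hj
  have h2 := hmax _ ⟨z', rfl⟩ h1
  have h3 := congrArg (Subgroup.map (Pi.evalMonoidHom f i)) h2
  rw [MonoidHom.map_zpowers, MonoidHom.map_zpowers] at h3
  simpa [hz', Function.update_self, Pi.evalMonoidHom] using h3

noncomputable def maxCyclicPiEquiv (hco : Pairwise fun i j => Nat.Coprime (Nat.card (f i)) (Nat.card (f j))) :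
    {M : Subgroup (∀ i, f i) // IsMaximalCyclic M} ≃
      ∀ i, {N : Subgroup (f i) // IsMaximalCyclic N} where
  toFun M i := ⟨M.1.map (Pi.evalMonoidHom f i), isMaximalCyclic_map_eval hco M.2 i⟩
  invFun N := ⟨Subgroup.pi Set.univ fun i => (N i).1, isMaximalCyclic_pi hco fun i => (N i).2⟩
  left_inv := by
    rintro ⟨M, hM⟩
    obtain ⟨z, rfl⟩ := hM.1
    apply Subtype.ext
    simp only [MonoidHom.map_zpowers]
    exact (zpowers_pi hco z).symm
  right_inv := by
    intro N
    funext i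
    apply Subtype.ext
    choose g hg using fun j => (N j).2.1
    have hpi : Subgroup.pi Set.univ (fun j => (N j).1) = Subgroup.zpowers g := by
      rw [zpowers_pi hco]
      exact congrArg _ (funext fun j => hg j)
    show (Subgroup.pi Set.univ fun j => (N j).1).map (Pi.evalMonoidHom f i) = (N i).1
    rw [hpi, MonoidHom.map_zpowers]
    exact (hg i).symm

end PiLemmas

lemma IsMaximalCyclic.map_mulEquiv {G H : Type*} [Group G] [Group H] (e : G ≃* H)
    {M : Subgroup G} (hM : IsMaximalCyclic M) : IsMaximalCyclic (M.map e.toMonoidHom) := by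
  obtain ⟨⟨g, rfl⟩, hmax⟩ := hM
  refine ⟨⟨e g, by rw [MonoidHom.map_zpowers]; rfl⟩, ?_⟩
  rintro K ⟨w, rfl⟩ hle
  have h1 : Subgroup.zpowers g ≤ Subgroup.map e.symm.toMonoidHom (Subgroup.zpowers w) := by
    intro x hx
    exact ⟨e x, hle (Subgroup.mem_map_of_mem _ hx), e.symm_apply_apply x⟩
  rw [MonoidHom.map_zpowers] at h1
  have h2 := hmax _ ⟨e.symm w, rfl⟩ h1
  rw [h2, MonoidHom.map_zpowers]
  show Subgroup.zpowers (e (e.symm w)) = Subgroup.zpowers w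
  rw [e.apply_symm_apply]

noncomputable def maxCyclicEquivOfMulEquiv {G H : Type*} [Group G] [Group H] (e : G ≃* H) :
    {M : Subgroup G // IsMaximalCyclic M} ≃ {M : Subgroup H // IsMaximalCyclic M} where
  toFun M := ⟨M.1.map e.toMonoidHom, M.2.map_mulEquiv e⟩
  invFun M := ⟨M.1.map e.symm.toMonoidHom, M.2.map_mulEquiv e.symm⟩
  left_inv M := by
    apply Subtype.ext
    show (M.1.map e.toMonoidHom).map e.symm.toMonoidHom = M.1
    rw [Subgroup.map_map]
    have : (e.symm.toMonoidHom.comp e.toMonoidHom) = MonoidHom.id G := by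
      ext x; exact e.symm_apply_apply x
    rw [this, Subgroup.map_id]
  right_inv M := by
    apply Subtype.ext
    show (M.1.map e.symm.toMonoidHom).map e.toMonoidHom = M.1
    rw [Subgroup.map_map]
    have : (e.toMonoidHom.comp e.symm.toMonoidHom) = MonoidHom.id H := by
      ext x; exact e.apply_symm_apply x
    rw [this, Subgroup.map_id]

/-- If `G` is a finite nilpotent group with prime factors `p₁, …, p_r` and
`m p` is the number of maximal cyclic subgroups of a Sylow `p`-subgroup of `G`, then the
independence number of the enhanced power graph of `G` is the product of the `m pᵢ`. -/
theorem stmt_3 {G : Type*} [Group G] [Fintype G] (hG : Group.IsNilpotent G)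
    (P : ∀ p : ℕ, Sylow p G) (m : ℕ → ℕ)
    (hm : ∀ p ∈ (Fintype.card G).primeFactors,
      m p = {H : Subgroup ↥((P p : Sylow p G) : Subgroup G) | IsMaximalCyclic H}.ncard) :
    indepNum (enhancedPowerGraph G) = ∏ p ∈ (Fintype.card G).primeFactors, m p := by
  classical
  have hnc : Nat.card G = Fintype.card G := Nat.card_eq_fintype_card
  rw [← hnc] at hm ⊢
  have hnorm : ∀ (p : ℕ) (_ : Fact p.Prime) (Q : Sylow p G), (↑Q : Subgroup G).Normal :=
    ((isNilpotent_of_finite_tfae (G := G)).out 0 3).mp hG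
  obtain ⟨e⟩ :
      Nonempty ((∀ p : (Nat.card G).primeFactors, ∀ P : Sylow p G, (↑P : Subgroup G)) ≃* G) :=
    ((isNilpotent_of_finite_tfae (G := G)).out 0 4).mp hG
  have hfact : ∀ p : (Nat.card G).primeFactors, Fact (p : ℕ).Prime :=
    fun p => ⟨Nat.prime_of_mem_primeFactors p.2⟩
  have ep : ∀ p : (Nat.card G).primeFactors,
      (∀ P : Sylow (p : ℕ) G, (↑P : Subgroup G)) ≃* ((P (p : ℕ) : Sylow (p : ℕ) G) : Subgroup G) := by
    intro p
    haveI := hfact p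
    haveI : Unique (Sylow (p : ℕ) G) :=
      Sylow.unique_of_normal (P (p : ℕ)) (hnorm (p : ℕ) (hfact p) (P (p : ℕ)))
    exact (MulEquiv.piUnique _).trans
      (MulEquiv.subgroupCongr
        (congrArg (fun Q : Sylow (p : ℕ) G => (Q : Subgroup G))
          (Subsingleton.elim _ (P (p : ℕ)))))
  have hcardeq : ∀ p : (Nat.card G).primeFactors,
      Nat.card (∀ P : Sylow (p : ℕ) G, (↑P : Subgroup G)) =
        (p : ℕ) ^ (Nat.card G).factorization (p : ℕ) := by
    intro p
    haveI := hfact p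
    rw [Nat.card_congr (ep p).toEquiv]
    exact Sylow.card_eq_multiplicity (P (p : ℕ))
  have hco : Pairwise fun p q : (Nat.card G).primeFactors =>
      Nat.Coprime (Nat.card (∀ P : Sylow (p : ℕ) G, (↑P : Subgroup G)))
        (Nat.card (∀ P : Sylow (q : ℕ) G, (↑P : Subgroup G))) := by
    intro p q hpq
    rw [hcardeq p, hcardeq q]
    have hne : (p : ℕ) ≠ (q : ℕ) := fun h => hpq (Subtype.ext h)
    exact Nat.Coprime.pow _ _
      ((Nat.coprime_primes (hfact p).out (hfact q).out).mpr hne)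
  calc indepNum (enhancedPowerGraph G)
      = {H : Subgroup G | IsMaximalCyclic H}.ncard := indepNum_eq_card_isMaximalCyclic
    _ = Nat.card {M : Subgroup G // IsMaximalCyclic M} := (Nat.card_coe_set_eq _).symm
    _ = Nat.card {M : Subgroup (∀ p : (Nat.card G).primeFactors,
          ∀ P : Sylow (p : ℕ) G, (↑P : Subgroup G)) // IsMaximalCyclic M} :=
        Nat.card_congr (maxCyclicEquivOfMulEquiv e).symm
    _ = Nat.card (∀ p : (Nat.card G).primeFactors,
          {N : Subgroup (∀ P : Sylow (p : ℕ) G, (↑P : Subgroup G)) // IsMaximalCyclic N}) :=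
        Nat.card_congr (maxCyclicPiEquiv hco)
    _ = ∏ p : (Nat.card G).primeFactors,
          Nat.card {N : Subgroup (∀ P : Sylow (p : ℕ) G, (↑P : Subgroup G)) // IsMaximalCyclic N} :=
        Nat.card_pi
    _ = ∏ p : (Nat.card G).primeFactors, m (p : ℕ) := by
        refine Finset.prod_congr rfl fun p _ => ?_
        rw [Nat.card_congr (maxCyclicEquivOfMulEquiv (ep p)), hm (p : ℕ) p.2,
          ← Nat.card_coe_set_eq]
        rfl
    _ = ∏ p ∈ (Nat.card G).primeFactors, m p := Finset.prod_coe_sort _ _
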